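/- Let A > 4 and let an interval [t₁', At₁'] ⊂ (0,∞) be covered by at most two consecutive intervals from a finite partition {J̃_j} of a larger interval into consecutive subintervals. Then there exists an index j such that |J̃_j| ≥ (√A/2)|J̃_{j-1}|. -/
import Mathlib


/-- Combinatorial length comparison: let `A > 4`, `t' > 0`, and let
`τ : ℕ → ℝ` be the nondecreasing endpoints (with `τ 0 ≥ 0`) of consecutive intervals
`J̃_i = [τ (i-1), τ i]`. If `[t', A t']` is covered by at most two consecutive intervals
`J̃_j ∪ J̃_{j+1}` (i.e. `τ (j-1) ≤ t'` and `A t' ≤ τ (j+1)` for some `j ≥ 2`), then some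
interval satisfies `|J̃_{i+1}| ≥ (√A/2) |J̃_i|`. -/
theorem stmt15 (A t' : ℝ) (hA : 4 < A) (ht' : 0 < t')
    (τ : ℕ → ℝ) (hτ : Monotone τ) (hτ0 : 0 ≤ τ 0)
    (j : ℕ) (hj : 2 ≤ j) (hcov₁ : τ (j - 1) ≤ t') (hcov₂ : A * t' ≤ τ (j + 1)) :
    ∃ i : ℕ, 1 ≤ i ∧
      τ (i + 1) - τ i ≥ (Real.sqrt A / 2) * (τ i - τ (i - 1)) := by
  set s := Real.sqrt A with hs
  have hA0 : (0:ℝ) ≤ A := by linarith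
  have hss : s * s = A := Real.mul_self_sqrt hA0
  have hs2 : 2 < s := by
    have := (Real.lt_sqrt (by norm_num : (0:ℝ) ≤ 2)).mpr (by nlinarith : (2:ℝ)^2 < A)
    simpa [hs] using this
  by_cases hb : τ j ≤ s * t'
  · refine ⟨j, by omega, ?_⟩
    have h0 : 0 ≤ τ (j - 1) := le_trans hτ0 (hτ (Nat.zero_le _))
    have hsp : (0:ℝ) < s := by linarith
    nlinarith [hcov₂, hb, h0, ht', hs2, hss, mul_nonneg hsp.le h0,
      mul_nonneg hsp.le (sub_nonneg.mpr hb), mul_pos ht' (by linarith : (0:ℝ) < s - 2),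
      mul_pos hsp (mul_pos ht' (by linarith : (0:ℝ) < s - 2))]
  · refine ⟨j - 1, by omega, ?_⟩
    have h1 : j - 1 + 1 = j := by omega
    have h0 : 0 ≤ τ (j - 1 - 1) := le_trans hτ0 (hτ (Nat.zero_le _))
    rw [h1]
    push_neg at hb
    have hsp : (0:ℝ) < s := by linarith
    nlinarith [hcov₁, hb, h0, ht', hs2, hss, mul_nonneg hsp.le h0,
      mul_pos ht' (by linarith : (0:ℝ) < s - 2),
      mul_nonneg hsp.le (sub_nonneg.mpr hcov₁)]
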